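/- For L = 2 and K divisible by 4, the maximum cardinality of a set S such that some injective t makes (S, t) a conflict-free one-shot schedule in a 2-locally connected network with K users is exactly K/2. -/

import Mathlib

/-- `(S, t)` is a conflict-free one-shot schedule in an `L`-locally connected
network with `K` users: `S ⊆ {1,…,K}`, `t` maps `S` into `{1,…,K}` injectively,
each receiver `i ∈ S` is connected to its serving transmitter `t i`
(`t i ≤ i ≤ t i + L`), and no receiver `i ∈ S` is connected to the transmitter
`t j` serving a different receiver `j ∈ S`. -/
def IsCFSchedule (L K : ℕ) (S : Finset ℕ) (t : ℕ → ℕ) : Prop :=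
  S ⊆ Finset.Icc 1 K ∧
  (∀ i ∈ S, t i ∈ Finset.Icc 1 K) ∧
  Set.InjOn t ↑S ∧
  (∀ i ∈ S, t i ≤ i ∧ i ≤ t i + L) ∧
  (∀ i ∈ S, ∀ j ∈ S, i ≠ j → ¬(t j ≤ i ∧ i ≤ t j + L))

/-- For `L = 2` and `K` divisible by `4`, the maximum number of receivers
schedulable by a conflict-free one-shot schedule in a `2`-locally connected
network with `K` users is exactly `K / 2`. -/
theorem max_schedule_L2 (K : ℕ) (hK : 4 ∣ K) :
    IsGreatest {n : ℕ | ∃ (S : Finset ℕ) (t : ℕ → ℕ),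
      IsCFSchedule 2 K S t ∧ S.card = n} (K / 2) := by
  obtain ⟨q, hq⟩ := hK
  constructor
  · -- achievability
    refine ⟨(Finset.range q).biUnion (fun k => ({4*k+3, 4*k+4} : Finset ℕ)),
      (fun i => if i % 4 = 3 then i - 2 else i), ?_, ?_⟩
    · have hmem : ∀ i, i ∈ (Finset.range q).biUnion
          (fun k => ({4*k+3, 4*k+4} : Finset ℕ)) ↔
          ∃ k, k < q ∧ (i = 4*k+3 ∨ i = 4*k+4) := by
        intro i
        simp [Finset.mem_biUnion]
      have ht3 : ∀ k : ℕ, (if (4*k+3) % 4 = 3 then (4*k+3) - 2 else (4*k+3)) = 4*k+1 := by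
        intro k
        have : (4*k+3) % 4 = 3 := by omega
        simp [this]
      have ht4 : ∀ k : ℕ, (if (4*k+4) % 4 = 3 then (4*k+4) - 2 else (4*k+4)) = 4*k+4 := by
        intro k
        have : (4*k+4) % 4 = 0 := by omega
        simp [this]
      refine ⟨?_, ?_, ?_, ?_, ?_⟩
      · intro i hi
        obtain ⟨k, hk, hik⟩ := (hmem i).1 hi
        simp only [Finset.mem_Icc]
        omega
      · intro i hi
        obtain ⟨k, hk, hik⟩ := (hmem i).1 hi
        simp only [Finset.mem_Icc]
        rcases hik with h | h <;> subst h
        · simp only [ht3]; omega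
        · simp only [ht4]; omega
      · intro i hi j hj hij
        simp only [Finset.coe_biUnion, Set.mem_iUnion] at hi hj
        obtain ⟨a, ha, hia⟩ := hi
        obtain ⟨b, hb, hjb⟩ := hj
        simp only [Finset.coe_range, Set.mem_Iio] at ha hb
        simp only [Finset.coe_insert, Finset.coe_singleton, Set.mem_insert_iff,
          Set.mem_singleton_iff] at hia hjb
        rcases hia with h1 | h1 <;> rcases hjb with h2 | h2 <;> subst h1 <;> subst h2 <;>
          simp only [ht3, ht4] at hij <;> omega
      · intro i hi
        obtain ⟨k, hk, hik⟩ := (hmem i).1 hi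
        rcases hik with h | h <;> subst h
        · simp only [ht3]; omega
        · simp only [ht4]; omega
      · intro i hi j hj hij
        obtain ⟨a, ha, hia⟩ := (hmem i).1 hi
        obtain ⟨b, hb, hjb⟩ := (hmem j).1 hj
        rcases hia with h1 | h1 <;> rcases hjb with h2 | h2 <;> subst h1 <;> subst h2 <;>
          simp only [ht3, ht4] <;> omega
    · rw [Finset.card_biUnion]
      · have h2 : ∀ k ∈ Finset.range q, ({4*k+3, 4*k+4} : Finset ℕ).card = 2 := by
          intro k _
          rw [Finset.card_insert_of_notMem (by simp), Finset.card_singleton]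
        rw [Finset.sum_congr rfl h2, Finset.sum_const, Finset.card_range, smul_eq_mul]
        omega
      · intro a _ b _ hab
        rw [Function.onFun, Finset.disjoint_left]
        intro x hx hx'
        simp only [Finset.mem_insert, Finset.mem_singleton] at hx hx'
        omega
  · -- upper bound
    rintro n ⟨S, t, ⟨hsub, _, _, hbound, hconf⟩, rfl⟩
    -- key: any three scheduled receivers span at least 4
    have gap : ∀ i ∈ S, ∀ j ∈ S, ∀ k ∈ S, i < j → j < k → i + 4 ≤ k := by
      intro i hi j hj k hk h1 h2
      have h3 : ¬(t j ≤ i ∧ i ≤ t j + 2) := hconf i hi j hj (by omega)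
      have h4 : ¬(t j ≤ k ∧ k ≤ t j + 2) := hconf k hk j hj (by omega)
      have hb := hbound j hj
      omega
    have key : S.card ≤ 2 * ((S.image (fun x => (x - 1) / 4)).card) := by
      apply Finset.card_le_mul_card_image
      intro a _
      by_contra hcard
      push_neg at hcard
      set T := S.filter (fun x => (x - 1) / 4 = a) with hT
      have hT3 : 3 ≤ T.card := hcard
      have hne : T.Nonempty := Finset.card_pos.1 (by omega)
      have h1lt : 1 < T.card := by omega
      set m := T.min' hne
      set M := T.max' hne
      have hmM : m < M := Finset.min'_lt_max'_of_card T h1lt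
      have hT' : ((T.erase m).erase M).Nonempty := by
        apply Finset.card_pos.1
        have e1 := Finset.card_erase_le (s := T.erase m) (a := M)
        have e2 : (T.erase m).card = T.card - 1 :=
          Finset.card_erase_of_mem (T.min'_mem hne)
        have e3 : ((T.erase m).erase M).card = (T.erase m).card - 1 := by
          apply Finset.card_erase_of_mem
          exact Finset.mem_erase.2 ⟨by omega, T.max'_mem hne⟩
        omega
      obtain ⟨j, hj⟩ := hT'
      have hjM : j ≠ M := (Finset.mem_erase.1 hj).1
      have hjm : j ≠ m := (Finset.mem_erase.1 (Finset.mem_erase.1 hj).2).1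
      have hjT : j ∈ T := (Finset.mem_erase.1 (Finset.mem_erase.1 hj).2).2
      have hmj : m < j := lt_of_le_of_ne (T.min'_le j hjT) (Ne.symm hjm)
      have hjM' : j < M := lt_of_le_of_ne (T.le_max' j hjT) hjM
      have hmS : m ∈ S := (Finset.mem_filter.1 (T.min'_mem hne)).1
      have hjS : j ∈ S := (Finset.mem_filter.1 hjT).1
      have hMS : M ∈ S := (Finset.mem_filter.1 (T.max'_mem hne)).1
      have hgap := gap m hmS j hjS M hMS hmj hjM'
      have hma : (m - 1) / 4 = a := (Finset.mem_filter.1 (T.min'_mem hne)).2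
      have hMa : (M - 1) / 4 = a := (Finset.mem_filter.1 (T.max'_mem hne)).2
      have hm1 : 1 ≤ m := (Finset.mem_Icc.1 (hsub hmS)).1
      omega
    have himg : S.image (fun x => (x - 1) / 4) ⊆ Finset.range q := by
      intro a ha
      obtain ⟨x, hx, rfl⟩ := Finset.mem_image.1 ha
      have := Finset.mem_Icc.1 (hsub hx)
      simp only [Finset.mem_range]
      omega
    have := Finset.card_le_card himg
    rw [Finset.card_range] at this
    omega
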